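/- The subgroup of GL₂(ℚ) generated by {a, b} is exactly the set of matrices of the form [[p^n, k·p^{−l}], [0, 1]] with n, k, l ∈ ℤ. -/

import Mathlib

/-- The matrix realization of the Baumslag–Solitar group `BS(p)`:
the subgroup of `GL₂(ℚ)` generated by `a = [[p,0],[0,1]]` and `b = [[1,1],[0,1]]`
is exactly the set of matrices `[[p^n, k·p^{-l}],[0,1]]` with `n, k, l ∈ ℤ`. -/
theorem baumslagSolitar_matrix_representation (p : ℕ) (hp : 2 ≤ p)
    (a b : (Matrix (Fin 2) (Fin 2) ℚ)ˣ)
    (ha : (a : Matrix (Fin 2) (Fin 2) ℚ) = !![(p : ℚ), 0; 0, 1])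
    (hb : (b : Matrix (Fin 2) (Fin 2) ℚ) = !![1, 1; 0, 1]) :
    (Subgroup.closure {a, b} : Set (Matrix (Fin 2) (Fin 2) ℚ)ˣ) =
      {g : (Matrix (Fin 2) (Fin 2) ℚ)ˣ | ∃ n k l : ℤ,
        (g : Matrix (Fin 2) (Fin 2) ℚ) =
          !![(p : ℚ) ^ n, (k : ℚ) * (p : ℚ) ^ (-l); 0, 1]} := by
  have hp0 : (p : ℚ) ≠ 0 := by positivity
  -- inverse of a
  have hainv : ((a⁻¹ : _ˣ) : Matrix (Fin 2) (Fin 2) ℚ) = !![(p : ℚ)⁻¹, 0; 0, 1] := by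
    rw [Matrix.coe_units_inv, ha]
    apply Matrix.inv_eq_right_inv
    rw [Matrix.mul_fin_two]
    ext i j
    fin_cases i <;> fin_cases j <;>
      simp [Matrix.one_fin_two, mul_inv_cancel₀ hp0]
  have hbinv : ((b⁻¹ : _ˣ) : Matrix (Fin 2) (Fin 2) ℚ) = !![1, -1; 0, 1] := by
    rw [Matrix.coe_units_inv, hb]
    apply Matrix.inv_eq_right_inv
    rw [Matrix.mul_fin_two]
    ext i j
    fin_cases i <;> fin_cases j <;> simp [Matrix.one_fin_two]
  -- powers of a
  have hazpow : ∀ m : ℤ, ((a ^ m : _ˣ) : Matrix (Fin 2) (Fin 2) ℚ) = !![(p : ℚ) ^ m, 0; 0, 1] := by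
    intro m
    induction m using Int.induction_on with
    | zero => simp [Matrix.one_fin_two]
    | succ m ih =>
        rw [zpow_add_one, Units.val_mul, ih, ha, Matrix.mul_fin_two, zpow_add_one₀ hp0]
        ext i j
        fin_cases i <;> fin_cases j <;> simp
    | pred m ih =>
        rw [zpow_sub_one, Units.val_mul, ih, hainv, Matrix.mul_fin_two, zpow_sub_one₀ hp0]
        ext i j
        fin_cases i <;> fin_cases j <;> simp [div_eq_mul_inv]
  -- powers of b
  have hbzpow : ∀ m : ℤ, ((b ^ m : _ˣ) : Matrix (Fin 2) (Fin 2) ℚ) = !![1, (m : ℚ); 0, 1] := by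
    intro m
    induction m using Int.induction_on with
    | zero => simp [Matrix.one_fin_two]
    | succ m ih =>
        rw [zpow_add_one, Units.val_mul, ih, hb, Matrix.mul_fin_two]
        ext i j
        fin_cases i <;> fin_cases j <;> simp <;> push_cast <;> ring
    | pred m ih =>
        rw [zpow_sub_one, Units.val_mul, ih, hbinv, Matrix.mul_fin_two]
        ext i j
        fin_cases i <;> fin_cases j <;> simp <;> push_cast <;> ring
  ext g
  simp only [SetLike.mem_coe, Set.mem_setOf_eq]
  constructor
  · intro hg
    induction hg using Subgroup.closure_induction with
    | mem x hx =>
        rcases hx with hx | hx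
        · refine ⟨1, 0, 0, ?_⟩
          subst hx; rw [ha]; norm_num
        · simp only [Set.mem_singleton_iff] at hx
          refine ⟨0, 1, 0, ?_⟩
          subst hx; rw [hb]; norm_num
    | one =>
        refine ⟨0, 0, 0, ?_⟩
        rw [Units.val_one, Matrix.one_fin_two]; norm_num
    | mul x y hx hy ihx ihy =>
        obtain ⟨n1, k1, l1, h1⟩ := ihx
        obtain ⟨n2, k2, l2, h2⟩ := ihy
        refine ⟨n1 + n2, k2 * p ^ (max (l2 - n1) l1 + n1 - l2).toNat
            + k1 * p ^ (max (l2 - n1) l1 - l1).toNat, max (l2 - n1) l1, ?_⟩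
        have e1 : ((max (l2 - n1) l1 + n1 - l2).toNat : ℤ) = max (l2 - n1) l1 + n1 - l2 := by
          rw [Int.toNat_of_nonneg]; omega
        have e2 : ((max (l2 - n1) l1 - l1).toNat : ℤ) = max (l2 - n1) l1 - l1 := by
          rw [Int.toNat_of_nonneg]; omega
        have key : ((k2 * p ^ (max (l2 - n1) l1 + n1 - l2).toNat
            + k1 * p ^ (max (l2 - n1) l1 - l1).toNat : ℤ) : ℚ) * (p : ℚ) ^ (-(max (l2 - n1) l1))
            = (p : ℚ) ^ n1 * ((k2 : ℚ) * (p : ℚ) ^ (-l2)) + (k1 : ℚ) * (p : ℚ) ^ (-l1) := by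
          push_cast
          rw [← zpow_natCast (p : ℚ) (max (l2 - n1) l1 + n1 - l2).toNat,
            ← zpow_natCast (p : ℚ) (max (l2 - n1) l1 - l1).toNat, e1, e2]
          rw [add_mul, mul_assoc, mul_assoc, ← zpow_add₀ hp0, ← zpow_add₀ hp0]
          rw [show max (l2 - n1) l1 + n1 - l2 + -(max (l2 - n1) l1) = n1 + -l2 by ring,
            show max (l2 - n1) l1 - l1 + -(max (l2 - n1) l1) = -l1 by ring, zpow_add₀ hp0]
          ring
        rw [Units.val_mul, h1, h2, Matrix.mul_fin_two]
        ext i j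
        fin_cases i <;> fin_cases j <;> simp
        · rw [← zpow_add₀ hp0]
        · push_cast at key
          rw [← zpow_neg, ← zpow_neg, ← zpow_neg]
          linear_combination -key
    | inv x hx ihx =>
        obtain ⟨n, k, l, h⟩ := ihx
        refine ⟨-n, -k, l + n, ?_⟩
        rw [Matrix.coe_units_inv, h]
        apply Matrix.inv_eq_right_inv
        rw [Matrix.mul_fin_two]
        ext i j
        fin_cases i <;> fin_cases j <;> simp [Matrix.one_fin_two]
        · exact mul_inv_cancel₀ (zpow_ne_zero _ hp0)
        · rw [zpow_add₀ hp0, zpow_neg, zpow_neg]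
          field_simp
          ring
  · rintro ⟨n, k, l, hg⟩
    have key : g = a ^ (-l) * b ^ k * a ^ (l + n) := by
      apply Units.ext
      rw [Units.val_mul, Units.val_mul, hazpow, hbzpow, hazpow, hg, Matrix.mul_fin_two,
        Matrix.mul_fin_two]
      ext i j
      fin_cases i <;> fin_cases j <;> simp
      · rw [← zpow_neg, ← zpow_add₀ hp0]; ring_nf
      · ring
    rw [key]
    have hamem : a ∈ Subgroup.closure {a, b} := Subgroup.subset_closure (by simp)
    have hbmem : b ∈ Subgroup.closure {a, b} := Subgroup.subset_closure (by simp)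
    exact mul_mem (mul_mem (zpow_mem hamem _) (zpow_mem hbmem _)) (zpow_mem hamem _)
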